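/- Let Φ ∈ P(M,N) and Ψ ∈ P(M,M−N) be Naimark complements and K ⊆ [M] with |K| = k ≤ N. Then the multiset of singular values of Ψ_{K^c} consists of M−N−k ones together with the k singular values of Φ_K (when k ≤ M−N). -/

import Mathlib

open Matrix Finset Polynomial


noncomputable def colSub {N M : ℕ} (Φ : Matrix (Fin N) (Fin M) ℂ) (K : Finset (Fin M)) :
    Matrix (Fin N) ↥K ℂ := Φ.submatrix id (fun k => (k : Fin M))

/-- The k-dimensional volume of the parallelotope spanned by the columns of Φ indexed by K. -/
noncomputable def vol {N M : ℕ} (Φ : Matrix (Fin N) (Fin M) ℂ) (K : Finset (Fin M)) : ℝ :=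
  Real.sqrt (((colSub Φ K)ᴴ * colSub Φ K).det.re)

/-- The multiset of singular values of a matrix, computed from Aᴴ * A. -/
noncomputable def svalsCol {m n : Type*} [Fintype m] [Fintype n] [DecidableEq n]
    (A : Matrix m n ℂ) : Multiset ℝ :=
  Multiset.map (fun i => Real.sqrt ((Matrix.isHermitian_conjTranspose_mul_self A).eigenvalues i))
    Finset.univ.val

/-- The multiset of singular values of a matrix, computed from A * Aᴴ. -/
noncomputable def svalsRow {m n : Type*} [Fintype m] [Fintype n] [DecidableEq m]
    (A : Matrix m n ℂ) : Multiset ℝ :=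
  Multiset.map (fun i => Real.sqrt ((Matrix.isHermitian_mul_conjTranspose_self A).eigenvalues i))
    Finset.univ.val

lemma charmatrix_map_eval {n : Type*} [Fintype n] [DecidableEq n] (M : Matrix n n ℂ) (r : ℂ) :
    (charmatrix M).map (Polynomial.eval r) = r • (1 : Matrix n n ℂ) - M := by
  ext i j
  by_cases h : i = j <;>
    simp [charmatrix_apply, h, Matrix.one_apply, Matrix.diagonal_apply]

lemma eval_charpoly' {n : Type*} [Fintype n] [DecidableEq n] (M : Matrix n n ℂ) (r : ℂ) :
    (Matrix.charpoly M).eval r = (r • (1 : Matrix n n ℂ) - M).det := by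
  rw [Matrix.charpoly, ← charmatrix_map_eval M r, ← Polynomial.coe_evalRingHom,
    RingHom.map_det, RingHom.mapMatrix_apply]

lemma conj_sub_smul {n : Type*} [Fintype n] [DecidableEq n]
    (U : Matrix.unitaryGroup n ℂ) (D : Matrix n n ℂ) (r : ℂ) :
    r • (1 : Matrix n n ℂ) - (U : Matrix n n ℂ) * D * (star U : Matrix n n ℂ)
      = (U : Matrix n n ℂ) * (r • (1 : Matrix n n ℂ) - D) * (star U : Matrix n n ℂ) := by
  rw [Matrix.mul_sub, Matrix.sub_mul]
  congr 1
  rw [Matrix.mul_smul, Matrix.smul_mul, mul_one,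
    (Matrix.mem_unitaryGroup_iff).mp U.2]

lemma charpoly_conj_diag {n : Type*} [Fintype n] [DecidableEq n]
    {A : Matrix n n ℂ} {f : n → ℂ} {U : Matrix.unitaryGroup n ℂ}
    (h : A = (U : Matrix n n ℂ) * Matrix.diagonal f * (star U : Matrix n n ℂ)) :
    A.charpoly = ∏ i, (X - C (f i)) := by
  apply Polynomial.funext
  intro r
  rw [eval_charpoly', h, conj_sub_smul, Matrix.det_mul, Matrix.det_mul, mul_comm,
    ← mul_assoc, ← Matrix.det_mul, ← Matrix.det_mul]
  rw [(Matrix.mem_unitaryGroup_iff').mp U.2, Matrix.one_mul]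
  have : r • (1 : Matrix n n ℂ) - Matrix.diagonal f
      = Matrix.diagonal (fun i => r - f i) := by
    ext i j
    rcases eq_or_ne i j with rfl | hij
    · simp
    · simp [Matrix.one_apply_ne hij, Matrix.diagonal_apply_ne _ hij]
  rw [this, Matrix.det_diagonal, Polynomial.eval_prod]
  simp

lemma roots_of_diag {n : Type*} [Fintype n] [DecidableEq n]
    {A : Matrix n n ℂ} {f : n → ℂ} {U : Matrix.unitaryGroup n ℂ}
    (h : A = (U : Matrix n n ℂ) * Matrix.diagonal f * (star U : Matrix n n ℂ)) :
    A.charpoly.roots = Multiset.map f Finset.univ.val := by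
  rw [charpoly_conj_diag h]
  have h2 : ∏ i, (X - C (f i)) = ((Finset.univ.val.map f).map (fun a => X - C a)).prod := by
    rw [Multiset.map_map]; rfl
  rw [h2, Polynomial.roots_multiset_prod_X_sub_C]

lemma eig_multiset_eq {n : Type*} [Fintype n] [DecidableEq n] {A : Matrix n n ℂ}
    (hA : A.IsHermitian) {d : n → ℝ} {U : Matrix.unitaryGroup n ℂ}
    (h : A = (U : Matrix n n ℂ) * Matrix.diagonal (fun i => (d i : ℂ)) * (star U : Matrix n n ℂ)) :
    Multiset.map hA.eigenvalues Finset.univ.val = Multiset.map d Finset.univ.val := by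
  apply Multiset.map_injective Complex.ofReal_injective
  rw [Multiset.map_map, Multiset.map_map]
  have h1 : Multiset.map ((fun r : ℝ => (r : ℂ)) ∘ hA.eigenvalues) Finset.univ.val
      = A.charpoly.roots :=
    (roots_of_diag (U := hA.eigenvectorUnitary) hA.spectral_theorem).symm
  rw [h1, roots_of_diag h]
  rfl

lemma charpoly_mul_conjT {m n : Type*} [Fintype m] [Fintype n] [DecidableEq m] [DecidableEq n]
    (A : Matrix m n ℂ) (h : Fintype.card n ≤ Fintype.card m) :
    (A * Aᴴ).charpoly = X ^ (Fintype.card m - Fintype.card n) * (Aᴴ * A).charpoly := by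
  apply Polynomial.eq_of_infinite_eval_eq
  apply Set.Infinite.mono (s := {x : ℂ | x ≠ 0})
  · intro x hx
    have hx : (x : ℂ) ≠ 0 := hx
    simp only [Set.mem_setOf_eq, Polynomial.eval_mul, Polynomial.eval_pow, Polynomial.eval_X]
    rw [eval_charpoly', eval_charpoly']
    have e1 : x • (1 : Matrix m m ℂ) - A * Aᴴ = x • ((1 : Matrix m m ℂ) + A * (-(x⁻¹ • Aᴴ))) := by
      rw [smul_add, Matrix.mul_neg, Matrix.mul_smul, smul_neg, smul_smul,
        mul_inv_cancel₀ hx, one_smul, ← sub_eq_add_neg]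
    have e2 : x • (1 : Matrix n n ℂ) - Aᴴ * A = x • ((1 : Matrix n n ℂ) + (-(x⁻¹ • Aᴴ)) * A) := by
      rw [smul_add, Matrix.neg_mul, Matrix.smul_mul, smul_neg, smul_smul,
        mul_inv_cancel₀ hx, one_smul, ← sub_eq_add_neg]
    rw [e1, e2, Matrix.det_smul, Matrix.det_smul, Matrix.det_one_add_mul_comm,
      ← mul_assoc, ← pow_add, Nat.sub_add_cancel h]
  · exact Set.Finite.infinite_compl (Set.finite_singleton 0)

lemma spectral_coe {n : Type*} [Fintype n] [DecidableEq n] {A : Matrix n n ℂ}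
    (hA : A.IsHermitian) :
    A = (hA.eigenvectorUnitary : Matrix n n ℂ)
        * Matrix.diagonal (fun i => (hA.eigenvalues i : ℂ))
        * (star hA.eigenvectorUnitary : Matrix n n ℂ) :=
  hA.spectral_theorem

lemma eig_mul_conjT_multiset {m n : Type*} [Fintype m] [Fintype n] [DecidableEq m] [DecidableEq n]
    (A : Matrix m n ℂ) (h : Fintype.card n ≤ Fintype.card m) :
    Multiset.map (Matrix.isHermitian_mul_conjTranspose_self A).eigenvalues Finset.univ.val =
      Multiset.replicate (Fintype.card m - Fintype.card n) 0 +
        Multiset.map (Matrix.isHermitian_conjTranspose_mul_self A).eigenvalues Finset.univ.val := by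
  apply Multiset.map_injective Complex.ofReal_injective
  rw [Multiset.map_add, Multiset.map_map, Multiset.map_map, Multiset.map_replicate]
  have h1 := roots_of_diag (spectral_coe (Matrix.isHermitian_mul_conjTranspose_self A))
  have h2 := roots_of_diag (spectral_coe (Matrix.isHermitian_conjTranspose_mul_self A))
  have h3 : Multiset.map ((fun r : ℝ => (r : ℂ)) ∘
      (Matrix.isHermitian_mul_conjTranspose_self A).eigenvalues) Finset.univ.val
      = (A * Aᴴ).charpoly.roots := by rw [h1]; rfl
  have h4 : Multiset.map ((fun r : ℝ => (r : ℂ)) ∘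
      (Matrix.isHermitian_conjTranspose_mul_self A).eigenvalues) Finset.univ.val
      = (Aᴴ * A).charpoly.roots := by rw [h2]; rfl
  rw [h3, h4, charpoly_mul_conjT A h, Polynomial.roots_mul
    (mul_ne_zero (pow_ne_zero _ Polynomial.X_ne_zero) (Matrix.charpoly_monic _).ne_zero),
    Polynomial.roots_pow, Polynomial.roots_X, Multiset.nsmul_singleton]
  simp

lemma one_sub_spectral {n : Type*} [Fintype n] [DecidableEq n] {C : Matrix n n ℂ}
    (hC : C.IsHermitian) :
    (1 : Matrix n n ℂ) - C = (hC.eigenvectorUnitary : Matrix n n ℂ) *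
      Matrix.diagonal (fun i => ((1 - hC.eigenvalues i : ℝ) : ℂ)) *
      (star hC.eigenvectorUnitary : Matrix n n ℂ) := by
  have h1 : Matrix.diagonal (fun i => ((1 - hC.eigenvalues i : ℝ) : ℂ))
      = 1 - Matrix.diagonal (fun i => (hC.eigenvalues i : ℂ)) := by
    ext i j
    rcases eq_or_ne i j with rfl | hij
    · simp
    · simp [Matrix.one_apply_ne hij, Matrix.diagonal_apply_ne _ hij]
  rw [h1, Matrix.mul_sub, Matrix.sub_mul, Matrix.mul_one,
    (Matrix.mem_unitaryGroup_iff).mp hC.eigenvectorUnitary.2, ← spectral_coe hC]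

lemma colSub_compl_mul {L M : ℕ} (Ψ : Matrix (Fin L) (Fin M) ℂ) (hΨ : Ψ * Ψᴴ = 1)
    (K : Finset (Fin M)) :
    colSub Ψ Kᶜ * (colSub Ψ Kᶜ)ᴴ = 1 - colSub Ψ K * (colSub Ψ K)ᴴ := by
  ext a b
  rw [Matrix.sub_apply, eq_sub_iff_add_eq, ← hΨ]
  simp only [Matrix.mul_apply, Matrix.conjTranspose_apply, colSub, Matrix.submatrix_apply, id]
  rw [Finset.sum_coe_sort Kᶜ (fun j => Ψ a j * star (Ψ b j)),
    Finset.sum_coe_sort K (fun j => Ψ a j * star (Ψ b j)),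
    Finset.sum_compl_add_sum]

lemma colSub_transpose_mul {N L M : ℕ} (Φ : Matrix (Fin N) (Fin M) ℂ)
    (Ψ : Matrix (Fin L) (Fin M) ℂ) (hNaimark : Ψᴴ * Ψ = 1 - Φᴴ * Φ) (K : Finset (Fin M)) :
    (colSub Ψ K)ᴴ * colSub Ψ K = 1 - (colSub Φ K)ᴴ * colSub Φ K := by
  ext i j
  have h := congrFun (congrFun hNaimark (i : Fin M)) (j : Fin M)
  simp only [Matrix.mul_apply, Matrix.conjTranspose_apply, Matrix.sub_apply,
    Matrix.one_apply] at h ⊢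
  simpa [colSub, Subtype.coe_inj] using h

/-- For Naimark complements Φ and Ψ and |K| = k ≤ min(N, M−N), the singular values of Ψ_{Kᶜ}
are M−N−k ones together with the singular values of Φ_K. -/
theorem naimark_singular_values {N L M k : ℕ}
    (Φ : Matrix (Fin N) (Fin M) ℂ) (Ψ : Matrix (Fin L) (Fin M) ℂ)
    (hL : N + L = M) (hkN : k ≤ N) (hkL : k ≤ L)
    (hΦ : Φ * Φᴴ = 1) (hΨ : Ψ * Ψᴴ = 1)
    (hNaimark : Ψᴴ * Ψ = 1 - Φᴴ * Φ)
    (K : Finset (Fin M)) (hK : K.card = k) :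
    svalsRow (colSub Ψ Kᶜ) = Multiset.replicate (L - k) 1 + svalsCol (colSub Φ K) := by
  classical
  have hA := Matrix.isHermitian_mul_conjTranspose_self (colSub Ψ Kᶜ)
  have hB := Matrix.isHermitian_mul_conjTranspose_self (colSub Ψ K)
  have hC := Matrix.isHermitian_conjTranspose_mul_self (colSub Ψ K)
  have hD := Matrix.isHermitian_conjTranspose_mul_self (colSub Φ K)
  have step1 : Multiset.map hA.eigenvalues Finset.univ.val
      = Multiset.map (fun i => 1 - hB.eigenvalues i) Finset.univ.val := by
    refine eig_multiset_eq (U := hB.eigenvectorUnitary) hA ?_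
    rw [colSub_compl_mul Ψ hΨ K]
    exact one_sub_spectral hB
  have step2 : Multiset.map hB.eigenvalues Finset.univ.val
      = Multiset.replicate (L - k) 0 + Multiset.map hC.eigenvalues Finset.univ.val := by
    have h := eig_mul_conjT_multiset (colSub Ψ K)
      (by simpa [Fintype.card_coe, hK] using hkL)
    simpa [Fintype.card_coe, hK] using h
  have step3 : Multiset.map hC.eigenvalues Finset.univ.val
      = Multiset.map (fun i => 1 - hD.eigenvalues i) Finset.univ.val := by
    refine eig_multiset_eq (U := hD.eigenvectorUnitary) hC ?_
    rw [colSub_transpose_mul Φ Ψ hNaimark K]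
    exact one_sub_spectral hD
  have final : Multiset.map hA.eigenvalues Finset.univ.val
      = Multiset.replicate (L - k) 1 + Multiset.map hD.eigenvalues Finset.univ.val := by
    have e1 : Multiset.map (fun i => 1 - hB.eigenvalues i) Finset.univ.val
        = Multiset.map (fun r : ℝ => 1 - r) (Multiset.map hB.eigenvalues Finset.univ.val) := by
      rw [Multiset.map_map]; rfl
    rw [step1, e1, step2, Multiset.map_add, Multiset.map_replicate, Multiset.map_map]
    have e2 : Multiset.map ((fun r : ℝ => 1 - r) ∘ hC.eigenvalues) Finset.univ.val
        = Multiset.map (fun r : ℝ => 1 - r) (Multiset.map hC.eigenvalues Finset.univ.val) := by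
      rw [Multiset.map_map]
    rw [e2, step3, Multiset.map_map]
    congr 1
    · norm_num
    · exact Multiset.map_congr rfl (fun x _ => by simp)
  unfold svalsRow svalsCol
  have e3 : Multiset.map (fun i => Real.sqrt (hA.eigenvalues i)) Finset.univ.val
      = Multiset.map Real.sqrt (Multiset.map hA.eigenvalues Finset.univ.val) := by
    rw [Multiset.map_map]; rfl
  rw [e3, final, Multiset.map_add, Multiset.map_replicate, Real.sqrt_one, Multiset.map_map]
  rfl
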